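/- arXiv:2205.11176 — 2 statements merged into one kernel-verified Lean document; each statement's English description precedes it below -/
import Mathlib

section
/- With L₁, L₂, T, L₂^c, r, φ as in the context: the function r is globally bounded, i.e., sup{ r(s) : s ∈ L₂^c } < ∞; equivalently, the set { ‖δ_s∘T‖ : s ∈ L₂^c } of operator norms of the continuous functionals δ_s∘T is bounded. -/
open scoped ZeroAtInfty

noncomputable section

/-- A principal `𝕋`-bundle: a `𝕋`-symmetric subset `L` of an ambient complex topological
vector space not containing `0` such that `L ∪ {0}` is compact. -/
structure TBundle (E : Type*) [AddCommGroup E] [Module ℂ E] [TopologicalSpace E] where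
  carrier : Set E
  smul_mem : ∀ z : ℂ, ‖z‖ = 1 → ∀ t ∈ carrier, z • t ∈ carrier
  zero_not_mem : (0 : E) ∉ carrier
  isCompact_union : IsCompact (carrier ∪ {0})

variable {E F : Type*} [AddCommGroup E] [Module ℂ E] [TopologicalSpace E]
  [AddCommGroup F] [Module ℂ F] [TopologicalSpace F]

/-- `L̂ = L ∪ {0}`. -/
def TBundle.hat (L : TBundle E) : Set E := L.carrier ∪ {0}

/-- A subset `S` is `𝕋`-symmetric if `𝕋S = S`. -/
def TSymm (S : Set E) : Prop := ∀ z : ℂ, ‖z‖ = 1 → ∀ x ∈ S, z • x ∈ S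

/-- Rotation of a point of `L` by a unimodular scalar. -/
def TBundle.sm (L : TBundle E) (z : ℂ) (hz : ‖z‖ = 1) (t : L.carrier) : L.carrier :=
  ⟨z • (t : E), L.smul_mem z hz t t.2⟩

theorem TBundle.hat_smul_mem (L : TBundle E) (z : ℂ) (hz : ‖z‖ = 1) {x : E}
    (hx : x ∈ L.hat) : z • x ∈ L.hat := by
  rcases hx with hx | hx
  · exact Or.inl (L.smul_mem z hz x hx)
  · simp only [Set.mem_singleton_iff] at hx
    subst hx
    right; simp

/-- Rotation of a point of `L̂` by a unimodular scalar. -/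
def TBundle.hsm (L : TBundle E) (z : ℂ) (hz : ‖z‖ = 1) (t : L.hat) : L.hat :=
  ⟨z • (t : E), L.hat_smul_mem z hz t.2⟩

/-- The commutative JB*-triple `C₀^𝕋(L)` of `𝕋`-equivariant elements of `C₀(L, ℂ)`,
as a (closed) submodule of `C₀(L, ℂ)`. -/
def TBundle.C0T (L : TBundle E) : Submodule ℂ C₀(↥L.carrier, ℂ) where
  carrier := {a | ∀ (z : ℂ) (hz : ‖z‖ = 1) (t : L.carrier), a (L.sm z hz t) = z * a t}
  add_mem' := by
    intro a b ha hb z hz t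
    simp [ha z hz t, hb z hz t, mul_add]
  zero_mem' := by intro z hz t; simp
  smul_mem' := by
    intro c a ha z hz t
    simp [ha z hz t]
    ring

/-- `T` preserves orthogonality: functions with zero pointwise product are mapped to
functions with zero pointwise product. -/
def OrthogonalityPreserving (L₁ : TBundle E) (L₂ : TBundle F)
    (T : L₁.C0T →ₗ[ℂ] L₂.C0T) : Prop :=
  ∀ a b : L₁.C0T, (∀ t : L₁.carrier, a.1 t * b.1 t = 0) →
    ∀ s : L₂.carrier, (T a).1 s * (T b).1 s = 0

/-- The support of the functional `δ_s ∘ T`: all `t ∈ L̂₁` such that every `𝕋`-symmetric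
relatively open neighbourhood `U` of `t` in `L̂₁` contains the cozero set of some
`a ∈ C₀^𝕋(L₁)` with `T(a)(s) ≠ 0`. -/
def suppDelta {L₁ : TBundle E} {L₂ : TBundle F} (T : L₁.C0T →ₗ[ℂ] L₂.C0T)
    (s : L₂.carrier) : Set E :=
  {t | t ∈ L₁.hat ∧ ∀ U : Set E, t ∈ U → TSymm U →
      (∃ V : Set E, IsOpen V ∧ U = V ∩ L₁.hat) →
      ∃ a : L₁.C0T, (∀ x : L₁.carrier, (x : E) ∉ U → a.1 x = 0) ∧ (T a).1 s ≠ 0}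

/-- The set `L₂^z` of points where `δ_s ∘ T` vanishes. -/
def Lzero {L₁ : TBundle E} {L₂ : TBundle F} (T : L₁.C0T →ₗ[ℂ] L₂.C0T) :
    Set L₂.carrier :=
  {s | ∀ a : L₁.C0T, (T a).1 s = 0}

/-- The set `L₂^d` of points where `δ_s ∘ T` is discontinuous (w.r.t. the sup norm). -/
def Ldisc {L₁ : TBundle E} {L₂ : TBundle F} (T : L₁.C0T →ₗ[ℂ] L₂.C0T) :
    Set L₂.carrier :=
  {s | ¬ Continuous fun a : L₁.C0T => (T a).1 s}

/-- The set `L₂^{nz}` of points where `δ_s ∘ T` is nonzero. -/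
def Lnz {L₁ : TBundle E} {L₂ : TBundle F} (T : L₁.C0T →ₗ[ℂ] L₂.C0T) :
    Set L₂.carrier :=
  {s | ∃ a : L₁.C0T, (T a).1 s ≠ 0}

/-- The set `L₂^c` of points where `δ_s ∘ T` is nonzero and norm-continuous. -/
def Lcont {L₁ : TBundle E} {L₂ : TBundle F} (T : L₁.C0T →ₗ[ℂ] L₂.C0T) :
    Set L₂.carrier :=
  {s | (∃ a : L₁.C0T, (T a).1 s ≠ 0) ∧ Continuous fun a : L₁.C0T => (T a).1 s}

/-- The `𝕋`-orbit of a point. -/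
def Torbit (t : E) : Set E := {x | ∃ z : ℂ, ‖z‖ = 1 ∧ x = z • t}

/-- The equivalence relation on `L̂` identifying points of the same `𝕋`-orbit. -/
def TBundle.orbitSetoid (L : TBundle E) : Setoid ↥L.hat where
  r t₁ t₂ := ∃ z : ℂ, ‖z‖ = 1 ∧ (t₂ : E) = z • (t₁ : E)
  iseqv := by
    constructor
    · intro t; exact ⟨1, by simp, by simp⟩
    · rintro t₁ t₂ ⟨z, hz, h⟩
      have hz0 : z ≠ 0 := by intro h0; rw [h0] at hz; simp at hz
      refine ⟨z⁻¹, by simp [hz], ?_⟩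
      rw [h, smul_smul, inv_mul_cancel₀ hz0, one_smul]
    · rintro t₁ t₂ t₃ ⟨z, hz, h⟩ ⟨w, hw, h'⟩
      exact ⟨w * z, by simp [hz, hw], by rw [h', h, smul_smul]⟩

/-- The cozero set of an element of `C₀^𝕋(L)`, as a subset of the ambient space. -/
def coz {L : TBundle E} (a : L.C0T) : Set E := (↑) '' {t : L.carrier | a.1 t ≠ 0}

section MainStatements
section Aux

open scoped ZeroAtInfty BoundedContinuousFunction

variable {E : Type*} [AddCommGroup E] [Module ℂ E] [TopologicalSpace E]

lemma C0T_eval_continuous (L : TBundle E) (x : L.carrier) :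
    Continuous fun a : C₀(↥L.carrier, ℂ) => a x :=
  (continuous_eval_const (F := ↥L.carrier →ᵇ ℂ) x).comp
    ZeroAtInftyContinuousMap.isometry_toBCF.continuous

lemma C0T_isClosed (L : TBundle E) : IsClosed (L.C0T : Set C₀(↥L.carrier, ℂ)) := by
  have : (L.C0T : Set C₀(↥L.carrier, ℂ)) =
      ⋂ (z : ℂ) (hz : ‖z‖ = 1) (t : L.carrier),
        {a : C₀(↥L.carrier, ℂ) | a (L.sm z hz t) = z * a t} := by
    ext a
    simp only [Set.mem_iInter, Set.mem_setOf_eq]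
    rfl
  rw [this]
  refine isClosed_iInter fun z => isClosed_iInter fun hz => isClosed_iInter fun t => ?_
  exact isClosed_eq (C0T_eval_continuous L _) (continuous_const.mul (C0T_eval_continuous L _))

lemma C0T_pointwise_norm_le (L : TBundle E) (f : C₀(↥L.carrier, ℂ)) (x : L.carrier) :
    ‖f x‖ ≤ ‖f‖ := by
  rw [← ZeroAtInftyContinuousMap.norm_toBCF_eq_norm]
  exact f.toBCF.norm_coe_le_norm x

lemma exists_normalized (L : TBundle E) (a : ↥L.C0T) (t : L.carrier) (h : a.1 t ≠ 0) :
    ∃ b : ↥L.C0T, ‖b‖ ≤ 1 ∧ ‖b.1 t‖ = 1 := by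
  set α : ℂ := a.1 t with hα
  have hα0 : (0 : ℝ) < ‖α‖ := norm_pos_iff.mpr h
  have hden : ∀ x : L.carrier, (0 : ℝ) < max ‖a.1 x‖ ‖α‖ :=
    fun x => lt_max_of_lt_right hα0
  have hcont : Continuous fun x : L.carrier => (max ‖a.1 x‖ ‖α‖)⁻¹ • a.1 x := by
    refine Continuous.smul (Continuous.inv₀ ?_ fun x => (hden x).ne') a.1.continuous
    exact (a.1.continuous.norm).max continuous_const
  have hzero : Filter.Tendsto (fun x : L.carrier => (max ‖a.1 x‖ ‖α‖)⁻¹ • a.1 x)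
      (Filter.cocompact _) (nhds 0) := by
    have h1 : Filter.Tendsto (fun x : L.carrier => a.1 x) (Filter.cocompact _) (nhds 0) :=
      a.1.zero_at_infty'
    have h2 : Filter.Tendsto (fun x : L.carrier => (max ‖a.1 x‖ ‖α‖)⁻¹)
        (Filter.cocompact _) (nhds ((max 0 ‖α‖)⁻¹)) := by
      refine Filter.Tendsto.inv₀ (Filter.Tendsto.max ?_ tendsto_const_nhds) ?_
      · simpa using h1.norm
      · simpa using h
    simpa using h2.smul h1
  set f : C₀(↥L.carrier, ℂ) :=
    { toFun := fun x => (max ‖a.1 x‖ ‖α‖)⁻¹ • a.1 x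
      continuous_toFun := hcont
      zero_at_infty' := hzero } with hf
  have hfx : ∀ x : L.carrier, f x = (max ‖a.1 x‖ ‖α‖)⁻¹ • a.1 x := fun x => rfl
  have hmem : f ∈ L.C0T := by
    intro z hz x
    have ha := a.2 z hz x
    rw [hfx, hfx, ha]
    have : ‖(z * a.1 x : ℂ)‖ = ‖a.1 x‖ := by
      rw [norm_mul, hz, one_mul]
    rw [this]
    exact (mul_smul_comm ((max ‖a.1 x‖ ‖α‖)⁻¹) z (a.1 x)).symm
  refine ⟨⟨f, hmem⟩, ?_, ?_⟩
  · show ‖f‖ ≤ 1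
    rw [← ZeroAtInftyContinuousMap.norm_toBCF_eq_norm]
    refine (BoundedContinuousFunction.norm_le zero_le_one).mpr fun x => ?_
    show ‖(max ‖a.1 x‖ ‖α‖)⁻¹ • a.1 x‖ ≤ 1
    rw [norm_smul, norm_inv, Real.norm_eq_abs, abs_of_pos (hden x)]
    calc (max ‖a.1 x‖ ‖α‖)⁻¹ * ‖a.1 x‖
        ≤ (max ‖a.1 x‖ ‖α‖)⁻¹ * (max ‖a.1 x‖ ‖α‖) := by
          gcongr
          exact le_max_left _ _
      _ = 1 := inv_mul_cancel₀ (hden x).ne'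
  · show ‖f t‖ = 1
    rw [hfx, ← hα, max_self, norm_smul, norm_inv, Real.norm_eq_abs, abs_of_pos hα0,
      inv_mul_cancel₀ hα0.ne']

lemma bs_aux {X : Type*} [NormedAddCommGroup X] [NormedSpace ℂ X] [CompleteSpace X]
    {ι : Type*} (f : ι → X →ₗ[ℂ] ℂ) (C : ι → ℝ)
    (hC : ∀ i x, ‖f i x‖ ≤ C i * ‖x‖)
    (hpt : ∀ x, ∃ B, ∀ i, ‖f i x‖ ≤ B) :
    ∃ M, 0 ≤ M ∧ ∀ i x, ‖f i x‖ ≤ M * ‖x‖ := by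
  set g : ι → X →L[ℂ] ℂ := fun i => LinearMap.mkContinuous (f i) (C i) (hC i) with hg
  obtain ⟨M, hM⟩ := banach_steinhaus (g := g) fun x => (hpt x).imp fun B hB i => hB i
  refine ⟨max M 0, le_max_right _ _, fun i x => ?_⟩
  calc ‖f i x‖ = ‖g i x‖ := rfl
    _ ≤ ‖g i‖ * ‖x‖ := (g i).le_opNorm x
    _ ≤ max M 0 * ‖x‖ := by
        have := (hM i).trans (le_max_left M 0)
        exact mul_le_mul_of_nonneg_right this (norm_nonneg x)

end Aux

section MainStatements

variable [IsTopologicalAddGroup E] [ContinuousSMul ℂ E] [T2Space E]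
  [Module ℝ E] [IsScalarTower ℝ ℂ E] [LocallyConvexSpace ℝ E]
  [IsTopologicalAddGroup F] [ContinuousSMul ℂ F] [T2Space F]
  [Module ℝ F] [IsScalarTower ℝ ℂ F] [LocallyConvexSpace ℝ F]

set_option maxHeartbeats 1000000 in
set_option synthInstance.maxHeartbeats 400000 in
/-- With `T`, `L₂^c`, `r`, `φ` as in the context: `r` is globally
bounded on `L₂^c`. -/
theorem r_globally_bounded (L₁ : TBundle E) (L₂ : TBundle F)
    (T : L₁.C0T →ₗ[ℂ] L₂.C0T) (hT : OrthogonalityPreserving L₁ L₂ T)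
    (r : L₂.carrier → ℝ) (φ : L₂.carrier → L₁.carrier)
    (hr : ∀ s ∈ Lcont T, 0 < r s)
    (hrφ : ∀ s ∈ Lcont T, ∀ a : L₁.C0T, (T a).1 s = (r s : ℂ) * a.1 (φ s)) :
    ∃ M : ℝ, ∀ s ∈ Lcont T, r s ≤ M := by
  letI instN : NormedAddCommGroup ↥L₁.C0T := Submodule.normedAddCommGroup _
  letI instS : NormedSpace ℂ ↥L₁.C0T := Submodule.normedSpace _
  haveI instC : CompleteSpace ↥L₁.C0T :=
    (completeSpace_iff_isComplete_range
      (Isometry.isUniformInducing (fun x y => rfl : Isometry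
        (Subtype.val : ↥L₁.C0T → C₀(↥L₁.carrier, ℂ))))).mpr
      (by rw [Subtype.range_val]; exact (C0T_isClosed L₁).isComplete)
  set f : ↥(Lcont T) → (↥L₁.C0T →ₗ[ℂ] ℂ) := fun s =>
    { toFun := fun a : ↥L₁.C0T => (T a).1 s.1
      map_add' := by intro a b; simp
      map_smul' := by intro c a; simp } with hfdef
  have hfa : ∀ (s : ↥(Lcont T)) (a : ↥L₁.C0T), f s a = (T a).1 s.1 := fun s a => rfl
  have hC : ∀ (s : ↥(Lcont T)) (a : ↥L₁.C0T), ‖f s a‖ ≤ r s.1 * ‖a‖ := by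
    intro s a
    rw [hfa, hrφ s.1 s.2 a, norm_mul, Complex.norm_real, Real.norm_eq_abs,
      abs_of_pos (hr s.1 s.2)]
    have : ‖(a : C₀(↥L₁.carrier, ℂ)) (φ s.1)‖ ≤ ‖a‖ :=
      le_of_le_of_eq (C0T_pointwise_norm_le L₁ a.1 (φ s.1)) (Submodule.norm_coe a)
    exact mul_le_mul_of_nonneg_left this (hr s.1 s.2).le
  have hpt : ∀ a : ↥L₁.C0T, ∃ B, ∀ s : ↥(Lcont T), ‖f s a‖ ≤ B := by
    intro a
    exact ⟨‖(T a : C₀(↥L₂.carrier, ℂ))‖, fun s => by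
      rw [hfa]; exact C0T_pointwise_norm_le L₂ (T a).1 s.1⟩
  obtain ⟨M, hM0, hM⟩ := bs_aux (X := ↥L₁.C0T) f (fun s => r s.1) hC hpt
  refine ⟨M, fun s hs => ?_⟩
  obtain ⟨a, ha⟩ := hs.1
  have hφ : a.1 (φ s) ≠ 0 := by
    intro h0
    exact ha (by rw [hrφ s hs a, h0, mul_zero])
  obtain ⟨b, hb1, hb2⟩ := exists_normalized L₁ a (φ s) hφ
  have h1 : ‖f ⟨s, hs⟩ b‖ = r s * ‖b.1 (φ s)‖ := by
    rw [hfa, hrφ s hs b, norm_mul, Complex.norm_real, Real.norm_eq_abs, abs_of_pos (hr s hs)]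
  calc r s = r s * ‖b.1 (φ s)‖ := by rw [hb2, mul_one]
    _ = ‖f ⟨s, hs⟩ b‖ := h1.symm
    _ ≤ M * ‖b‖ := hM ⟨s, hs⟩ b
    _ ≤ M * 1 := mul_le_mul_of_nonneg_left hb1 hM0
    _ = M := mul_one M

end MainStatements
end MainStatements
end
end

section
/- Let L₁ and L₂ be principal 𝕋-bundles and let T : C₀^𝕋(L₁) → C₀^𝕋(L₂) be a (not necessarily continuous) linear orthogonality preserving map. Then there exist finitely many points t₁, …, t_m ∈ L̂₁ such that the union ⋃_{s ∈ L₂^d} supp(δ_s∘T) equals the disjoint union 𝕋t₁ ∪ … ∪ 𝕋t_m; equivalently, the set { q₁(t) : t ∈ supp(δ_s∘T) for some s ∈ L₂^d } ⊆ L̂₁/𝕋 is finite. -/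
open scoped ZeroAtInfty

noncomputable section

variable {E F : Type*} [AddCommGroup E] [Module ℂ E] [TopologicalSpace E]
  [AddCommGroup F] [Module ℂ F] [TopologicalSpace F]

section MainStatements

variable [IsTopologicalAddGroup E] [ContinuousSMul ℂ E] [T2Space E]
  [Module ℝ E] [IsScalarTower ℝ ℂ E] [LocallyConvexSpace ℝ E]
  [IsTopologicalAddGroup F] [ContinuousSMul ℂ F] [T2Space F]
  [Module ℝ F] [IsScalarTower ℝ ℂ F] [LocallyConvexSpace ℝ F]

set_option linter.unusedSectionVars false
set_option linter.unnecessarySimpa false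
set_option maxHeartbeats 1000000

def symCore (V : Set E) : Set E := {x | ∀ z : ℂ, ‖z‖ = 1 → z • x ∈ V}

lemma symCore_subset (V : Set E) : symCore V ⊆ V := fun x h => by
  simpa using h 1 (by simp)

lemma tsymm_symCore (V : Set E) : TSymm (symCore V) := by
  intro z hz x hx w hw
  rw [smul_smul]
  exact hx (w * z) (by simp [norm_mul, hz, hw])

lemma isOpen_symCore (V : Set E) (hV : IsOpen V) : IsOpen (symCore (E := E) V) := by
  haveI : CompactSpace (Metric.sphere (0:ℂ) 1) :=
    isCompact_iff_compactSpace.mp (isCompact_sphere 0 1)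
  rw [← isClosed_compl_iff]
  have heq : (symCore V)ᶜ =
      Prod.snd '' {p : Metric.sphere (0:ℂ) 1 × E | ((p.1 : ℂ) • p.2) ∈ Vᶜ} := by
    ext x
    simp only [Set.mem_compl_iff, symCore, Set.mem_setOf_eq, Set.mem_image, not_forall]
    constructor
    · rintro ⟨z, hz, hzx⟩
      exact ⟨⟨⟨z, by simpa [Complex.dist_eq] using hz⟩, x⟩, hzx, rfl⟩
    · rintro ⟨⟨z, y⟩, hmem, rfl⟩
      exact ⟨z, by simpa [Complex.dist_eq] using z.2, hmem⟩
  rw [heq]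
  apply isClosedMap_snd_of_compactSpace
  exact (hV.isClosed_compl).preimage ((continuous_subtype_val.comp continuous_fst).smul continuous_snd)

lemma self_mem_Torbit (t : E) : t ∈ Torbit t := ⟨1, by simp, by simp⟩

lemma Torbit_symm {t x : E} (h : x ∈ Torbit t) : t ∈ Torbit x := by
  obtain ⟨z, hz, rfl⟩ := h
  have hz0 : z ≠ 0 := fun h0 => by simp [h0] at hz
  exact ⟨z⁻¹, by simp [hz], by rw [smul_smul, inv_mul_cancel₀ hz0, one_smul]⟩

lemma Torbit_trans {t x y : E} (hx : x ∈ Torbit t) (hy : y ∈ Torbit x) : y ∈ Torbit t := by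
  obtain ⟨z, hz, rfl⟩ := hx
  obtain ⟨w, hw, rfl⟩ := hy
  exact ⟨w * z, by simp [norm_mul, hz, hw], by rw [smul_smul]⟩

lemma Torbit_eq_of_mem {t x : E} (h : x ∈ Torbit t) : Torbit x = Torbit t := by
  ext y
  exact ⟨fun hy => Torbit_trans h hy, fun hy => Torbit_trans (Torbit_symm h) hy⟩

lemma Torbit_eq_or_disjoint (t₁ t₂ : E) :
    Torbit t₁ = Torbit t₂ ∨ Disjoint (Torbit t₁) (Torbit t₂) := by
  by_cases h : Disjoint (Torbit t₁) (Torbit t₂)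
  · exact Or.inr h
  · left
    rw [Set.not_disjoint_iff] at h
    obtain ⟨x, hx₁, hx₂⟩ := h
    rw [← Torbit_eq_of_mem hx₁, Torbit_eq_of_mem hx₂]

lemma isCompact_Torbit (t : E) : IsCompact (Torbit t) := by
  haveI : CompactSpace (Metric.sphere (0:ℂ) 1) :=
    isCompact_iff_compactSpace.mp (isCompact_sphere 0 1)
  have : Torbit t = Set.range (fun z : Metric.sphere (0:ℂ) 1 => (z : ℂ) • t) := by
    ext x
    simp only [Torbit, Set.mem_setOf_eq, Set.mem_range]
    constructor
    · rintro ⟨z, hz, rfl⟩; exact ⟨⟨z, by simpa [Complex.dist_eq] using hz⟩, rfl⟩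
    · rintro ⟨z, rfl⟩; exact ⟨z, by simpa [Complex.dist_eq] using z.2, rfl⟩
  rw [this]
  exact isCompact_range (continuous_subtype_val.smul continuous_const)

lemma tsymm_Torbit (t : E) : TSymm (Torbit t) := by
  rintro z hz x ⟨w, hw, rfl⟩
  exact ⟨z * w, by simp [norm_mul, hz, hw], by rw [smul_smul]⟩

lemma orbit_separation {t₁ t₂ : E} (h : t₂ ∉ Torbit t₁) :
    ∃ V₁ V₂ : Set E, IsOpen V₁ ∧ IsOpen V₂ ∧ TSymm V₁ ∧ TSymm V₂ ∧
      t₁ ∈ V₁ ∧ t₂ ∈ V₂ ∧ Disjoint V₁ V₂ := by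
  have hdisj : Disjoint (Torbit t₁) (Torbit t₂) := by
    rcases Torbit_eq_or_disjoint t₁ t₂ with heq | hd
    · exact absurd (heq ▸ self_mem_Torbit t₂) h
    · exact hd
  obtain ⟨U₁, U₂, hU₁, hU₂, hsub₁, hsub₂, hd⟩ :=
    SeparatedNhds.of_isCompact_isCompact (isCompact_Torbit t₁) (isCompact_Torbit t₂) hdisj
  refine ⟨symCore U₁, symCore U₂, isOpen_symCore _ hU₁, isOpen_symCore _ hU₂,
    tsymm_symCore _, tsymm_symCore _, ?_, ?_, ?_⟩
  · exact fun z hz => hsub₁ (tsymm_Torbit t₁ z hz t₁ (self_mem_Torbit t₁))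
  · exact fun z hz => hsub₂ (tsymm_Torbit t₂ z hz t₂ (self_mem_Torbit t₂))
  · exact hd.mono (symCore_subset U₁) (symCore_subset U₂)

lemma TBundle.isCompact_hat (L : TBundle E) : IsCompact L.hat := L.isCompact_union

lemma TBundle.isClosed_hat (L : TBundle E) : IsClosed L.hat := L.isCompact_hat.isClosed

lemma TBundle.tsymm_hat (L : TBundle E) : TSymm L.hat := fun z hz x hx => L.hat_smul_mem z hz hx

section PartB
variable {L₁ : TBundle E} {L₂ : TBundle F}

lemma suppDelta_subset_hat (T : L₁.C0T →ₗ[ℂ] L₂.C0T) (s : L₂.carrier) :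
    suppDelta T s ⊆ L₁.hat := fun _ h => h.1

lemma suppDelta_smul_mem (T : L₁.C0T →ₗ[ℂ] L₂.C0T) (s : L₂.carrier) {t : E}
    (ht : t ∈ suppDelta T s) (z : ℂ) (hz : ‖z‖ = 1) : z • t ∈ suppDelta T s := by
  obtain ⟨hhat, hprop⟩ := ht
  refine ⟨L₁.hat_smul_mem z hz hhat, fun U hU hUsymm hUform => ?_⟩
  have hz0 : z ≠ 0 := fun h0 => by simp [h0] at hz
  have ht : t ∈ U := by
    have := hUsymm z⁻¹ (by simp [hz]) _ hU
    rwa [smul_smul, inv_mul_cancel₀ hz0, one_smul] at this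
  exact hprop U ht hUsymm hUform

lemma suppDelta_orbit_subset (T : L₁.C0T →ₗ[ℂ] L₂.C0T) (s : L₂.carrier) {t : E}
    (ht : t ∈ suppDelta T s) : Torbit t ⊆ suppDelta T s := by
  rintro x ⟨z, hz, rfl⟩
  exact suppDelta_smul_mem T s ht z hz

/-- Two points in the support of `δ_s ∘ T` lie in the same orbit. -/
lemma suppDelta_same_orbit (T : L₁.C0T →ₗ[ℂ] L₂.C0T)
    (hT : OrthogonalityPreserving L₁ L₂ T) (s : L₂.carrier) {t₁ t₂ : E}
    (h₁ : t₁ ∈ suppDelta T s) (h₂ : t₂ ∈ suppDelta T s) : t₂ ∈ Torbit t₁ := by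
  by_contra hne
  obtain ⟨V₁, V₂, hV₁, hV₂, hs₁, hs₂, hm₁, hm₂, hd⟩ := orbit_separation hne
  obtain ⟨a₁, hsupp₁, hne₁⟩ := h₁.2 (V₁ ∩ L₁.hat) ⟨hm₁, h₁.1⟩
    (fun z hz x hx => ⟨hs₁ z hz x hx.1, L₁.hat_smul_mem z hz hx.2⟩) ⟨V₁, hV₁, rfl⟩
  obtain ⟨a₂, hsupp₂, hne₂⟩ := h₂.2 (V₂ ∩ L₁.hat) ⟨hm₂, h₂.1⟩
    (fun z hz x hx => ⟨hs₂ z hz x hx.1, L₁.hat_smul_mem z hz hx.2⟩) ⟨V₂, hV₂, rfl⟩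
  have hzero : ∀ x : L₁.carrier, a₁.1 x * a₂.1 x = 0 := by
    intro x
    by_cases hx : a₁.1 x = 0
    · rw [hx, zero_mul]
    · have hx₁ : (x : E) ∈ V₁ ∩ L₁.hat := by
        by_contra hc; exact hx (hsupp₁ x hc)
      have hx₂ : (x : E) ∉ V₂ ∩ L₁.hat := fun hc =>
        (Set.disjoint_left.mp hd hx₁.1) hc.1
      rw [hsupp₂ x hx₂, mul_zero]
  exact hne₁ (by
    have := hT a₁ a₂ hzero s
    rcases mul_eq_zero.mp this with h | h
    · exact h
    · exact absurd h hne₂)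

/-- `δ_s ∘ T` is bounded on functions with cozero set inside `U`. -/
def BddOn (T : L₁.C0T →ₗ[ℂ] L₂.C0T) (s : L₂.carrier) (U : Set E) : Prop :=
  ∃ C : ℝ, 0 ≤ C ∧ ∀ a : L₁.C0T, (∀ x : L₁.carrier, (x : E) ∉ U → a.1 x = 0) →
    ‖(T a).1 s‖ ≤ C * ‖a.1‖

/-- `δ_s ∘ T` is unbounded near every symmetric neighbourhood of `t`. -/
def UnbddAt (T : L₁.C0T →ₗ[ℂ] L₂.C0T) (s : L₂.carrier) (t : E) : Prop :=
  ∀ V : Set E, IsOpen V → TSymm V → t ∈ V → ¬ BddOn T s (V ∩ L₁.hat)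

lemma unbddAt_of_orbit {T : L₁.C0T →ₗ[ℂ] L₂.C0T} {s : L₂.carrier} {t t' : E}
    (h : UnbddAt T s t) (ht' : t' ∈ Torbit t) : UnbddAt T s t' := by
  intro V hV hVsymm hmem
  obtain ⟨z, hz, rfl⟩ := ht'
  have hz0 : z ≠ 0 := fun h0 => by simp [h0] at hz
  have : t ∈ V := by
    have := hVsymm z⁻¹ (by simp [hz]) _ hmem
    rwa [smul_smul, inv_mul_cancel₀ hz0, one_smul] at this
  exact h V hV hVsymm this

lemma not_bddOn_iff {T : L₁.C0T →ₗ[ℂ] L₂.C0T} {s : L₂.carrier} {U : Set E} :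
    ¬ BddOn T s U ↔ ∀ C : ℝ, 0 ≤ C → ∃ a : L₁.C0T,
      (∀ x : L₁.carrier, (x : E) ∉ U → a.1 x = 0) ∧ C * ‖a.1‖ < ‖(T a).1 s‖ := by
  unfold BddOn
  push_neg
  rfl

/-- A point where `δ_s∘T` is everywhere-locally unbounded lies in the support. -/
lemma mem_suppDelta_of_unbddAt {T : L₁.C0T →ₗ[ℂ] L₂.C0T} {s : L₂.carrier} {t : E}
    (ht : t ∈ L₁.hat) (h : UnbddAt T s t) : t ∈ suppDelta T s := by
  refine ⟨ht, ?_⟩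
  rintro U hU hUsymm ⟨V', hV', rfl⟩
  set W : Set E := V' ∪ L₁.hatᶜ with hW
  have hWopen : IsOpen W := hV'.union L₁.isClosed_hat.isOpen_compl
  have htW : t ∈ symCore W := by
    intro z hz
    exact Or.inl (hUsymm z hz t hU).1
  have h1 := h (symCore W) (isOpen_symCore _ hWopen) (tsymm_symCore _) htW
  rw [not_bddOn_iff] at h1
  obtain ⟨a, hsupp, hlt⟩ := h1 0 le_rfl
  refine ⟨a, ?_, ?_⟩
  · intro x hx
    apply hsupp
    intro hc
    apply hx
    rcases (symCore_subset W) hc.1 with h' | h'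
    · exact ⟨h', hc.2⟩
    · exact absurd hc.2 h'
  · intro h0
    rw [h0] at hlt
    simp at hlt

/-- Boundedness implies continuity of `δ_s ∘ T`. -/
lemma continuous_of_bound {T : L₁.C0T →ₗ[ℂ] L₂.C0T} {s : L₂.carrier} {C : ℝ} (hC : 0 ≤ C)
    (h : ∀ a : L₁.C0T, ‖(T a).1 s‖ ≤ C * ‖a.1‖) :
    Continuous fun a : L₁.C0T => (T a).1 s := by
  have hlip : LipschitzWith ⟨C, hC⟩ (fun a : L₁.C0T => (T a).1 s) := by
    apply LipschitzWith.of_dist_le_mul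
    intro a b
    have h1 : (T a).1 s - (T b).1 s = (T (a - b)).1 s := by
      rw [map_sub T a b]; rfl
    have h2 : dist a b = ‖(a - b).1‖ := by
      have h3 : dist a b = dist a.1 b.1 := rfl
      rw [h3, dist_eq_norm]
      rfl
    rw [dist_eq_norm, h1, h2]
    exact h (a - b)
  exact hlip.continuous

end PartB

section PartC
variable {L₁ : TBundle E} {L₂ : TBundle F}

/-- Multiplying a `C₀` function by a continuous function bounded by 1. -/
def mulC0 {α : Type*} [TopologicalSpace α] (a : C₀(α, ℂ)) (g : α → ℝ) (hg : Continuous g)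
    (hbd : ∀ x, |g x| ≤ 1) : C₀(α, ℂ) where
  toFun := fun x => a x * (g x : ℂ)
  continuous_toFun := (map_continuous a).mul (Complex.continuous_ofReal.comp hg)
  zero_at_infty' := by
    refine squeeze_zero_norm (a := fun x => ‖a x‖) (fun x => ?_) (by simpa using a.zero_at_infty'.norm)
    rw [norm_mul]
    calc ‖a x‖ * ‖(g x : ℂ)‖ ≤ ‖a x‖ * 1 := by
          apply mul_le_mul_of_nonneg_left _ (norm_nonneg _)
          simpa using hbd x
      _ = ‖a x‖ := mul_one _

@[simp] lemma mulC0_apply {α : Type*} [TopologicalSpace α] (a : C₀(α, ℂ)) (g : α → ℝ)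
    (hg : Continuous g) (hbd : ∀ x, |g x| ≤ 1) (x : α) :
    mulC0 a g hg hbd x = a x * (g x : ℂ) := rfl

lemma norm_mulC0_le {α : Type*} [TopologicalSpace α] (a : C₀(α, ℂ)) (g : α → ℝ)
    (hg : Continuous g) (hbd : ∀ x, |g x| ≤ 1) : ‖mulC0 a g hg hbd‖ ≤ ‖a‖ := by
  rw [← ZeroAtInftyContinuousMap.norm_toBCF_eq_norm, ← ZeroAtInftyContinuousMap.norm_toBCF_eq_norm]
  rw [BoundedContinuousFunction.norm_le (norm_nonneg _)]
  intro x
  show ‖a x * (g x : ℂ)‖ ≤ ‖a.toBCF‖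
  rw [norm_mul]
  calc ‖a x‖ * ‖(g x : ℂ)‖ ≤ ‖a x‖ * 1 := by
        apply mul_le_mul_of_nonneg_left _ (norm_nonneg _)
        simpa using hbd x
    _ = ‖a.toBCF x‖ := mul_one _
    _ ≤ ‖a.toBCF‖ := BoundedContinuousFunction.norm_coe_le_norm _ _

lemma c0_sum_apply {α : Type*} [TopologicalSpace α] {ι : Type*} (s : Finset ι)
    (f : ι → C₀(α, ℂ)) (x : α) : (∑ i ∈ s, f i) x = ∑ i ∈ s, f i x :=
  map_sum (AddMonoidHom.mk' (fun f : C₀(α, ℂ) => f x) (fun _ _ => rfl)) f s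

lemma mem_C0T_iff {L : TBundle E} {a : C₀(↥L.carrier, ℂ)} :
    a ∈ L.C0T ↔ ∀ (z : ℂ) (hz : ‖z‖ = 1) (t : L.carrier), a (L.sm z hz t) = z * a t :=
  Iff.rfl

/-- Open saturated images in the orbit quotient. -/
lemma isOpen_mk_image (L : TBundle E) {V : Set E} (hV : IsOpen V) (hVs : TSymm V) :
    IsOpen (Quotient.mk L.orbitSetoid '' {x : ↥L.hat | (x : E) ∈ V}) := by
  letI : Setoid ↥L.hat := L.orbitSetoid
  rw [← isQuotientMap_quotient_mk'.isOpen_preimage]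
  have heq : Quotient.mk' ⁻¹' (Quotient.mk L.orbitSetoid '' {x : ↥L.hat | (x : E) ∈ V}) =
      {x : ↥L.hat | (x : E) ∈ V} := by
    ext x
    simp only [Set.mem_preimage, Set.mem_image, Set.mem_setOf_eq]
    constructor
    · rintro ⟨y, hy, heq⟩
      obtain ⟨z, hz, hxy⟩ := Quotient.exact heq
      rw [hxy]
      exact hVs z hz _ hy
    · exact fun h => ⟨x, h, rfl⟩
  rw [heq]
  exact hV.preimage continuous_subtype_val

lemma t2_quotient (L : TBundle E) : T2Space (Quotient L.orbitSetoid) := by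
  constructor
  intro c₁ c₂ hne
  induction c₁ using Quotient.inductionOn with | h x₁ => ?_
  induction c₂ using Quotient.inductionOn with | h x₂ => ?_
  have hno : (x₂ : E) ∉ Torbit (x₁ : E) := by
    rintro ⟨z, hz, hx⟩
    exact hne (Quotient.sound ⟨z, hz, hx⟩)
  obtain ⟨V₁, V₂, hV₁, hV₂, hs₁, hs₂, hm₁, hm₂, hd⟩ := orbit_separation hno
  refine ⟨Quotient.mk L.orbitSetoid '' {x : ↥L.hat | (x : E) ∈ V₁},
    Quotient.mk L.orbitSetoid '' {x : ↥L.hat | (x : E) ∈ V₂},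
    isOpen_mk_image L hV₁ hs₁, isOpen_mk_image L hV₂ hs₂,
    ⟨x₁, hm₁, rfl⟩, ⟨x₂, hm₂, rfl⟩, ?_⟩
  rw [Set.disjoint_left]
  rintro c ⟨y₁, hy₁, rfl⟩ ⟨y₂, hy₂, heq⟩
  obtain ⟨z, hz, hxy⟩ := Quotient.exact heq
  have : (y₁ : E) ∈ V₂ := by
    rw [hxy]
    exact hs₂ z hz _ hy₂
  exact Set.disjoint_left.mp hd hy₁ this

/-- **Localization of discontinuity.** If `δ_s ∘ T` is discontinuous then there is a point
near which it is unbounded in every symmetric neighbourhood. -/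
lemma exists_unbddAt (T : L₁.C0T →ₗ[ℂ] L₂.C0T) {s : L₂.carrier} (hs : s ∈ Ldisc T) :
    ∃ t ∈ L₁.hat, UnbddAt T s t := by
  by_contra hcon
  push_neg at hcon
  have hVx : ∀ x : ↥L₁.hat, ∃ V : Set E, IsOpen V ∧ TSymm V ∧ (x : E) ∈ V ∧
      BddOn T s (V ∩ L₁.hat) := by
    intro x
    have h1 := hcon x x.2
    unfold UnbddAt at h1
    push_neg at h1
    obtain ⟨V, hVo, hVs, hVm, hVb⟩ := h1
    exact ⟨V, hVo, hVs, hVm, hVb⟩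
  choose V hVo hVs hVm hVb using hVx
  have hcover : L₁.hat ⊆ ⋃ x : ↥L₁.hat, V x := by
    intro y hy
    exact Set.mem_iUnion.mpr ⟨⟨y, hy⟩, hVm ⟨y, hy⟩⟩
  obtain ⟨fs, hfs⟩ := L₁.isCompact_hat.elim_finite_subcover V hVo hcover
  -- set up quotient space
  haveI : CompactSpace ↥L₁.hat := isCompact_iff_compactSpace.mp L₁.isCompact_hat
  haveI : T2Space (Quotient L₁.orbitSetoid) := t2_quotient L₁
  set ι := {x : ↥L₁.hat // x ∈ fs} with hι
  set U : ι → Set (Quotient L₁.orbitSetoid) :=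
    fun i => Quotient.mk L₁.orbitSetoid '' {y : ↥L₁.hat | (y : E) ∈ V i.1} with hU
  have ho : ∀ i, IsOpen (U i) := fun i => isOpen_mk_image L₁ (hVo i.1) (hVs i.1)
  have hUcov : (Set.univ : Set (Quotient L₁.orbitSetoid)) ⊆ ⋃ i, U i := by
    rintro c -
    induction c using Quotient.inductionOn with | h y => ?_
    have := hfs y.2
    rw [Set.mem_iUnion] at this
    obtain ⟨x, hx⟩ := this
    rw [Set.mem_iUnion] at hx
    obtain ⟨hxfs, hyV⟩ := hx
    exact Set.mem_iUnion.mpr ⟨⟨x, hxfs⟩, ⟨y, hyV, rfl⟩⟩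
  obtain ⟨f, hf⟩ := PartitionOfUnity.exists_isSubordinate isClosed_univ U ho hUcov
  -- the equivariant partition functions on the carrier
  set qmap : ↥L₁.carrier → Quotient L₁.orbitSetoid :=
    fun x => Quotient.mk L₁.orbitSetoid ⟨(x : E), Or.inl x.2⟩ with hqmap
  have hqcont : Continuous qmap :=
    continuous_quotient_mk'.comp (Continuous.subtype_mk continuous_subtype_val _)
  set g : ι → ↥L₁.carrier → ℝ := fun i x => f i (qmap x) with hg
  have hgcont : ∀ i, Continuous (g i) := fun i => (f i).continuous.comp hqcont
  have hgbd : ∀ i x, |g i x| ≤ 1 := by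
    intro i x
    rw [abs_of_nonneg (f.nonneg i _)]
    exact f.le_one i _
  -- the pieces
  set piece : ι → L₁.C0T → C₀(↥L₁.carrier, ℂ) :=
    fun i a => mulC0 a.1 (g i) (hgcont i) (hgbd i) with hpiece
  have hpmem : ∀ i (a : L₁.C0T), piece i a ∈ L₁.C0T := by
    intro i a z hz t
    show a.1 (L₁.sm z hz t) * (g i (L₁.sm z hz t) : ℂ) = z * (a.1 t * (g i t : ℂ))
    have hgeq : g i (L₁.sm z hz t) = g i t := by
      have hrel : L₁.orbitSetoid.r (⟨(t : E), Or.inl t.2⟩ : ↥L₁.hat)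
          ⟨((L₁.sm z hz t : L₁.carrier) : E), Or.inl (L₁.sm z hz t).2⟩ := ⟨z, hz, rfl⟩
      have hq : qmap (L₁.sm z hz t) = qmap t := by
        simp only [hqmap]
        exact (Quotient.sound hrel).symm
      simp only [hg, hq]
    rw [hgeq, a.2 z hz t]
    ring
  have hsum : ∀ a : L₁.C0T, (∑ i : ι, (⟨piece i a, hpmem i a⟩ : L₁.C0T)) = a := by
    intro a
    apply Subtype.ext
    have hcoe : ((∑ i : ι, (⟨piece i a, hpmem i a⟩ : L₁.C0T) : L₁.C0T) : C₀(↥L₁.carrier, ℂ)) =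
        ∑ i : ι, piece i a := by
      exact map_sum (L₁.C0T.subtype) _ _
    rw [hcoe]
    ext x
    rw [c0_sum_apply]
    show ∑ i : ι, a.1 x * (g i x : ℂ) = a.1 x
    rw [← Finset.mul_sum]
    have h1 : ∑ i : ι, g i x = 1 := by
      have := f.sum_eq_one (Set.mem_univ (qmap x))
      rwa [finsum_eq_sum_of_fintype] at this
    have h2 : (∑ i : ι, (g i x : ℂ)) = ((∑ i : ι, g i x : ℝ) : ℂ) := by
      push_cast; ring
    rw [h2, h1]
    simp
  -- support of each piece
  have hpsupp : ∀ i (a : L₁.C0T) (x : L₁.carrier),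
      (x : E) ∉ V i.1 ∩ L₁.hat → (piece i a) x = 0 := by
    intro i a x hx
    have hxhat : (x : E) ∈ L₁.hat := Or.inl x.2
    have hxV : (x : E) ∉ V i.1 := fun hc => hx ⟨hc, hxhat⟩
    have hgz : g i x = 0 := by
      by_contra hgz
      have hmem1 : qmap x ∈ tsupport (f i) :=
        subset_tsupport _ (by simpa [Function.mem_support] using hgz)
      have := hf i hmem1
      obtain ⟨y, hyV, heq⟩ := this
      obtain ⟨z, hz, hxy⟩ := Quotient.exact heq
      apply hxV
      have : ((⟨(x : E), Or.inl x.2⟩ : ↥L₁.hat) : E) = z • (y : E) := hxy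
      rw [show (x : E) = z • (y : E) from this]
      exact hVs i.1 z hz _ hyV
    show a.1 x * (g i x : ℂ) = 0
    rw [hgz]
    simp
  -- assemble the bound
  choose C hC0 hCb using fun i : ι => hVb i.1
  have key : ∀ a : L₁.C0T, ‖(T a).1 s‖ ≤ (∑ i : ι, C i) * ‖a.1‖ := by
    intro a
    conv_lhs => rw [← hsum a]
    rw [map_sum]
    have hcoe2 : ((∑ i : ι, T ⟨piece i a, hpmem i a⟩ : L₂.C0T) : C₀(↥L₂.carrier, ℂ)) =
        ∑ i : ι, ((T ⟨piece i a, hpmem i a⟩ : L₂.C0T) : C₀(↥L₂.carrier, ℂ)) :=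
      map_sum (L₂.C0T.subtype) _ _
    calc ‖(∑ i : ι, T ⟨piece i a, hpmem i a⟩ : L₂.C0T).1 s‖
        = ‖∑ i : ι, (T (⟨piece i a, hpmem i a⟩ : L₁.C0T)).1 s‖ := by rw [hcoe2, c0_sum_apply]
      _ ≤ ∑ i : ι, ‖(T (⟨piece i a, hpmem i a⟩ : L₁.C0T)).1 s‖ := norm_sum_le _ _
      _ ≤ ∑ i : ι, C i * ‖a.1‖ := by
          apply Finset.sum_le_sum
          intro i _
          calc ‖(T (⟨piece i a, hpmem i a⟩ : L₁.C0T)).1 s‖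
              ≤ C i * ‖piece i a‖ := hCb i _ (hpsupp i a)
            _ ≤ C i * ‖a.1‖ := by
                apply mul_le_mul_of_nonneg_left _ (hC0 i)
                exact norm_mulC0_le _ _ _ _
      _ = (∑ i : ι, C i) * ‖a.1‖ := by rw [Finset.sum_mul]
  exact hs (continuous_of_bound (Finset.sum_nonneg fun i _ => hC0 i) key)

end PartC

section PartD
variable {L₁ : TBundle E} {L₂ : TBundle F}

/-- Evaluation at a point, as a continuous linear map on `C₀`. -/
def evalCLM (α : Type*) [TopologicalSpace α] (x : α) : C₀(α, ℂ) →L[ℂ] ℂ :=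
  LinearMap.mkContinuous ⟨⟨fun f => f x, fun _ _ => rfl⟩, fun _ _ => rfl⟩ 1 (fun f => by
    rw [one_mul, ← ZeroAtInftyContinuousMap.norm_toBCF_eq_norm]
    exact BoundedContinuousFunction.norm_coe_le_norm f.toBCF x)

@[simp] lemma evalCLM_apply {α : Type*} [TopologicalSpace α] (x : α) (f : C₀(α, ℂ)) :
    evalCLM α x f = f x := rfl

lemma norm_eval_le {α : Type*} [TopologicalSpace α] (f : C₀(α, ℂ)) (x : α) :
    ‖f x‖ ≤ ‖f‖ := by
  rw [← ZeroAtInftyContinuousMap.norm_toBCF_eq_norm]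
  exact BoundedContinuousFunction.norm_coe_le_norm f.toBCF x

lemma no_infinite_orbits (T : L₁.C0T →ₗ[ℂ] L₂.C0T) (hT : OrthogonalityPreserving L₁ L₂ T)
    (t : ℕ → E) (s : ℕ → L₂.carrier)
    (hmem : ∀ n, s n ∈ Ldisc T ∧ t n ∈ suppDelta T (s n))
    (hdistinct : ∀ m n, m ≠ n → t n ∉ Torbit (t m)) : False := by
  classical
  have hunb : ∀ n, UnbddAt T (s n) (t n) := by
    intro n
    obtain ⟨t', ht'hat, ht'unb⟩ := exists_unbddAt T (hmem n).1
    have ht'supp : t' ∈ suppDelta T (s n) := mem_suppDelta_of_unbddAt ht'hat ht'unb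
    have horb : t n ∈ Torbit t' := suppDelta_same_orbit T hT (s n) ht'supp (hmem n).2
    exact unbddAt_of_orbit ht'unb horb
  have hthat : ∀ n, t n ∈ L₁.hat := fun n => (hmem n).2.1
  haveI : (Filter.map t Filter.atTop).NeBot := (Filter.map_neBot_iff t).mpr Filter.atTop_neBot
  obtain ⟨x, hxhat, hx⟩ := L₁.isCompact_hat.exists_clusterPt (f := Filter.map t Filter.atTop)
    (Filter.le_principal_iff.mpr (Filter.mem_map.mpr (Filter.Eventually.of_forall hthat)))
  have hfreq : ∀ W : Set E, IsOpen W → x ∈ W → ∀ N : ℕ, ∃ n, N ≤ n ∧ t n ∈ W := by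
    intro W hW hxW N
    have hV : t '' {n | N ≤ n} ∈ Filter.map t Filter.atTop :=
      Filter.image_mem_map (Filter.mem_atTop N)
    obtain ⟨y, hyW, hyV⟩ := clusterPt_iff_nonempty.mp hx (hW.mem_nhds hxW) hV
    obtain ⟨n, hn, rfl⟩ := hyV
    exact ⟨n, hn, hyW⟩
  have huniq : ∃ N₀ : ℕ, ∀ n, N₀ ≤ n → t n ∉ Torbit x := by
    by_cases hcase : ∃ n, t n ∈ Torbit x
    · obtain ⟨n₀, hn₀⟩ := hcase
      refine ⟨n₀ + 1, fun n hn hmem' => ?_⟩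
      have hne' : n₀ ≠ n := by omega
      have : t n ∈ Torbit (t n₀) := by
        rw [Torbit_eq_of_mem hn₀]
        exact hmem'
      exact hdistinct n₀ n hne' this
    · exact ⟨0, fun n _ hm => hcase ⟨n, hm⟩⟩
  obtain ⟨N₀, hN₀⟩ := huniq
  have step : ∀ (N : ℕ) (W : Set E), IsOpen W → TSymm W → x ∈ W →
      ∃ (n : ℕ) (Vn Wn : Set E), N ≤ n ∧ t n ∈ Vn ∧ IsOpen Vn ∧ TSymm Vn ∧
        IsOpen Wn ∧ TSymm Wn ∧ x ∈ Wn ∧ Vn ⊆ W ∧ Wn ⊆ W ∧ Disjoint Vn Wn := by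
    intro N W hWo hWs hWx
    obtain ⟨n, hnN, hnW⟩ := hfreq W hWo hWx (max N N₀)
    have hnot : x ∉ Torbit (t n) := fun hc =>
      hN₀ n (le_trans (le_max_right _ _) hnN) (Torbit_symm hc)
    obtain ⟨V₁, V₂, hV₁o, hV₂o, hV₁s, hV₂s, hm₁, hm₂, hd⟩ := orbit_separation hnot
    exact ⟨n, V₁ ∩ W, V₂ ∩ W, le_trans (le_max_left _ _) hnN, ⟨hm₁, hnW⟩, hV₁o.inter hWo,
      (fun z hz y hy => ⟨hV₁s z hz y hy.1, hWs z hz y hy.2⟩), hV₂o.inter hWo,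
      (fun z hz y hy => ⟨hV₂s z hz y hy.1, hWs z hz y hy.2⟩), ⟨hm₂, hWx⟩,
      Set.inter_subset_right, Set.inter_subset_right,
      hd.mono Set.inter_subset_left Set.inter_subset_left⟩
  have hnextf : ∀ p : {p : ℕ × Set E × Set E // IsOpen p.2.2 ∧ TSymm p.2.2 ∧ x ∈ p.2.2},
      ∃ q : {q : ℕ × Set E × Set E // IsOpen q.2.2 ∧ TSymm q.2.2 ∧ x ∈ q.2.2},
        p.1.1 + 1 ≤ q.1.1 ∧ t q.1.1 ∈ q.1.2.1 ∧ IsOpen q.1.2.1 ∧ TSymm q.1.2.1 ∧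
          q.1.2.1 ⊆ p.1.2.2 ∧ q.1.2.2 ⊆ p.1.2.2 ∧ Disjoint q.1.2.1 q.1.2.2 := by
    rintro ⟨⟨N, VV, WW⟩, hWo, hWs, hWx⟩
    obtain ⟨n, Vn, Wn, h1, h2, h3, h4, h5, h6, h7, h8, h9, h10⟩ := step (N + 1) WW hWo hWs hWx
    exact ⟨⟨(n, Vn, Wn), h5, h6, h7⟩, h1, h2, h3, h4, h8, h9, h10⟩
  choose fnext hfnext using hnextf
  set p₀ : {p : ℕ × Set E × Set E // IsOpen p.2.2 ∧ TSymm p.2.2 ∧ x ∈ p.2.2} :=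
    ⟨(0, Set.univ, Set.univ), isOpen_univ, fun _ _ _ _ => Set.mem_univ _, Set.mem_univ _⟩ with hp₀
  set seq : ℕ → {p : ℕ × Set E × Set E // IsOpen p.2.2 ∧ TSymm p.2.2 ∧ x ∈ p.2.2} :=
    fun k => Nat.rec p₀ (fun _ q => fnext q) k with hseqdef
  have hseq : ∀ k, seq (k + 1) = fnext (seq k) := fun k => rfl
  set n : ℕ → ℕ := fun k => (seq (k + 1)).1.1 with hn
  set V : ℕ → Set E := fun k => (seq (k + 1)).1.2.1 with hV
  set W : ℕ → Set E := fun k => (seq (k + 1)).1.2.2 with hW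
  have hstep : ∀ k, t (n k) ∈ V k ∧ IsOpen (V k) ∧ TSymm (V k) ∧
      V k ⊆ (seq k).1.2.2 ∧ W k ⊆ (seq k).1.2.2 ∧ Disjoint (V k) (W k) := by
    intro k
    have h := hfnext (seq k)
    rw [← hseq k] at h
    exact ⟨h.2.1, h.2.2.1, h.2.2.2.1, h.2.2.2.2.1, h.2.2.2.2.2.1, h.2.2.2.2.2.2⟩
  have hWmono : ∀ k j, k ≤ j → W j ⊆ W k := by
    intro k j hkj
    induction j with
    | zero =>
      cases Nat.le_zero.mp hkj
      exact subset_rfl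
    | succ j ih =>
      rcases Nat.lt_or_ge k (j + 1) with hlt | hge
      · have hkj' : k ≤ j := Nat.lt_succ_iff.mp hlt
        exact subset_trans ((hstep (j + 1)).2.2.2.2.1) (ih hkj')
      · have heq : k = j + 1 := le_antisymm hkj hge
        rw [heq]
  have hVdisj : ∀ k j, k ≠ j → Disjoint (V k) (V j) := by
    have key : ∀ k j, k < j → Disjoint (V j) (V k) := by
      intro k j hkj
      have h1 : V j ⊆ W k := by
        rcases Nat.exists_eq_add_of_lt hkj with ⟨d, rfl⟩
        calc V (k + d + 1) ⊆ (seq (k + d + 1)).1.2.2 := (hstep (k + d + 1)).2.2.2.1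
          _ = W (k + d) := rfl
          _ ⊆ W k := hWmono k (k + d) (Nat.le_add_right _ _)
      exact ((hstep k).2.2.2.2.2).symm.mono_left h1
    intro k j hkj
    rcases Nat.lt_or_ge k j with h | h
    · exact (key k j h).symm
    · exact key j k (lt_of_le_of_ne h (Ne.symm hkj))
  -- rapidly growing functions with disjoint cozero sets
  have hak : ∀ k : ℕ, ∃ a : L₁.C0T,
      (∀ y : L₁.carrier, (y : E) ∉ V k ∩ L₁.hat → a.1 y = 0) ∧
      ‖a.1‖ = (1 / 2 : ℝ) ^ k ∧ ((k : ℝ) + 1) < ‖(T a).1 (s (n k))‖ := by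
    intro k
    have hVk := hstep k
    have hub := hunb (n k) (V k) hVk.2.1 hVk.2.2.1 hVk.1
    rw [not_bddOn_iff] at hub
    obtain ⟨a, hsupp, hlt⟩ := hub (((k : ℝ) + 1) * 2 ^ k) (by positivity)
    have ha1 : a.1 ≠ 0 := by
      intro h0
      have ha0 : a = 0 := Subtype.ext h0
      rw [ha0] at hlt
      rw [map_zero] at hlt
      have hz1 : ((0 : L₁.C0T) : C₀(↥L₁.carrier, ℂ)) = 0 := rfl
      have hz2 : ((0 : L₂.C0T) : C₀(↥L₂.carrier, ℂ)) = 0 := rfl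
      rw [hz1, hz2] at hlt
      simp at hlt
    have hpos : 0 < ‖a.1‖ := norm_pos_iff.mpr ha1
    set c : ℝ := (1 / 2 : ℝ) ^ k / ‖a.1‖ with hc
    have hcpos : 0 < c := div_pos (by positivity) hpos
    have hcoe : (((c : ℂ)) • a).1 = (c : ℂ) • a.1 := rfl
    refine ⟨(c : ℂ) • a, ?_, ?_, ?_⟩
    · intro y hy
      have : ((c : ℂ) • a).1 y = (c : ℂ) * a.1 y := rfl
      rw [this, hsupp y hy, mul_zero]
    · have hns : ‖(c : ℂ) • a.1‖ = ‖(c : ℂ)‖ * ‖a.1‖ := by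
        have h := norm_smul (c : ℂ) (a.1 : C₀(↥L₁.carrier, ℂ))
        convert h using 2
      rw [hcoe, hns, Complex.norm_real, Real.norm_eq_abs, abs_of_pos hcpos, hc,
        div_mul_cancel₀ _ (ne_of_gt hpos)]
    · rw [map_smul T]
      have happ : ((c : ℂ) • T a).1 (s (n k)) = (c : ℂ) * (T a).1 (s (n k)) := rfl
      rw [happ, norm_mul, Complex.norm_real, Real.norm_eq_abs, abs_of_pos hcpos]
      have h2k : (1 / 2 : ℝ) ^ k * 2 ^ k = 1 := by
        rw [← mul_pow]; norm_num
      have heq : c * ((((k : ℝ) + 1) * 2 ^ k) * ‖a.1‖) = (k : ℝ) + 1 := by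
        rw [hc]
        field_simp
        nlinarith [h2k]
      calc (k : ℝ) + 1 = c * ((((k : ℝ) + 1) * 2 ^ k) * ‖a.1‖) := heq.symm
        _ < c * ‖(T a).1 (s (n k))‖ := by
            apply mul_lt_mul_of_pos_left _ hcpos
            exact hlt
  choose a hasupp hanorm haval using hak
  set u : ℕ → C₀(↥L₁.carrier, ℂ) := fun k => (a k).1 with hu
  have hsummable : Summable u :=
    Summable.of_norm_bounded summable_geometric_two (fun k => le_of_eq (hanorm k))
  set A : C₀(↥L₁.carrier, ℂ) := ∑' k, u k with hA
  have hasum : HasSum u A := hsummable.hasSum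
  have hAx : ∀ y : L₁.carrier, A y = ∑' k, u k y := by
    intro y
    exact ((hasum.mapL (evalCLM _ y)).tsum_eq).symm
  have hAmem : A ∈ L₁.C0T := by
    intro z hz tt
    rw [hAx, hAx]
    calc ∑' k, u k (L₁.sm z hz tt) = ∑' k, z * u k tt := tsum_congr (fun k => (a k).2 z hz tt)
      _ = z * ∑' k, u k tt := tsum_mul_left
  set Aelem : L₁.C0T := ⟨A, hAmem⟩ with hAelem
  have hbig : ∀ j : ℕ, ((j : ℝ) + 1) < ‖(T Aelem).1 (s (n j))‖ := by
    intro j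
    have horth : ∀ y : L₁.carrier, (Aelem - a j).1 y * (a j).1 y = 0 := by
      intro y
      by_cases hj0 : (a j).1 y = 0
      · rw [hj0, mul_zero]
      · have hyV : (y : E) ∈ V j ∩ L₁.hat := by
          by_contra hcon; exact hj0 (hasupp j y hcon)
        have hz : ∀ k, k ≠ j → u k y = 0 := by
          intro k hk
          by_contra hcon
          have hyVk : (y : E) ∈ V k ∩ L₁.hat := by
            by_contra hcc; exact hcon (hasupp k y hcc)
          exact Set.disjoint_left.mp (hVdisj k j hk) hyVk.1 hyV.1
        have hAy : A y = u j y := by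
          rw [hAx]; exact tsum_eq_single j hz
        have hsub : (Aelem - a j).1 y = A y - u j y := rfl
        rw [hsub, hAy, sub_self, zero_mul]
    have hkey := hT (Aelem - a j) (a j) horth (s (n j))
    have hTa0 : (T (a j)).1 (s (n j)) ≠ 0 := by
      intro h0
      have hv := haval j
      rw [h0, norm_zero] at hv
      have hj' : (0 : ℝ) ≤ (j : ℝ) := Nat.cast_nonneg j
      linarith
    have h1 : (T (Aelem - a j)).1 (s (n j)) = 0 := by
      rcases mul_eq_zero.mp hkey with h | h
      · exact h
      · exact absurd h hTa0
    have h2 : (T Aelem).1 (s (n j)) = (T (a j)).1 (s (n j)) := by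
      rw [map_sub T] at h1
      have hsub2 : (T Aelem - T (a j)).1 (s (n j)) =
          (T Aelem).1 (s (n j)) - (T (a j)).1 (s (n j)) := rfl
      rw [hsub2] at h1
      exact sub_eq_zero.mp h1
    rw [h2]
    exact haval j
  obtain ⟨j, hj⟩ := exists_nat_gt ‖(T Aelem).1‖
  have hb1 := hbig j
  have hb2 := norm_eval_le (T Aelem).1 (s (n j))
  linarith

end PartD

/-- For a linear orthogonality preserving map
`T : C₀^𝕋(L₁) → C₀^𝕋(L₂)`, the union `⋃_{s ∈ L₂^d} supp(δ_s ∘ T)` is a finite disjoint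
union of `𝕋`-orbits `𝕋t₁ ∪ … ∪ 𝕋t_m` with `t₁, …, t_m ∈ L̂₁`. -/
theorem suppDelta_on_disc_finitely_many_orbits (L₁ : TBundle E) (L₂ : TBundle F)
    (T : L₁.C0T →ₗ[ℂ] L₂.C0T) (hT : OrthogonalityPreserving L₁ L₂ T) :
    ∃ (m : ℕ) (t : Fin m → E), (∀ i, t i ∈ L₁.hat) ∧
      (∀ i j, i ≠ j → Disjoint (Torbit (t i)) (Torbit (t j))) ∧
      (⋃ s ∈ Ldisc T, suppDelta T s) = ⋃ i, Torbit (t i) := by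
  classical
  have hSmem : ∀ x ∈ (⋃ s ∈ Ldisc T, suppDelta T s),
      ∃ s : L₂.carrier, s ∈ Ldisc T ∧ x ∈ suppDelta T s := by
    intro x hx
    rw [Set.mem_iUnion₂] at hx
    obtain ⟨s, hs, hxs⟩ := hx
    exact ⟨s, hs, hxs⟩
  set S := ⋃ s ∈ Ldisc T, suppDelta T s with hS
  have hfin : (Torbit '' S).Finite := by
    rw [← Set.not_infinite]
    intro hinf
    set e := hinf.natEmbedding with he
    have hx : ∀ k : ℕ, ∃ x, x ∈ S ∧ Torbit x = (e k : Set E) := by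
      intro k
      obtain ⟨x, hxS, hxe⟩ := (e k).2
      exact ⟨x, hxS, hxe⟩
    choose tt htS htorb using hx
    choose ss hssd hsss using fun k => hSmem (tt k) (htS k)
    refine no_infinite_orbits T hT tt ss (fun k => ⟨hssd k, hsss k⟩) ?_
    intro m' n' hmn hmem'
    have h1 : (e n' : Set E) = (e m' : Set E) := by
      rw [← htorb n', ← htorb m', Torbit_eq_of_mem hmem']
    exact hmn (e.injective (Subtype.ext h1)).symm
  haveI := hfin.fintype
  set m := Fintype.card ↥(Torbit '' S) with hm
  set eqv : ↥(Torbit '' S) ≃ Fin m := Fintype.equivFin _ with heqv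
  have hrep : ∀ i : Fin m, ∃ x, x ∈ S ∧ Torbit x = ((eqv.symm i : ↥(Torbit '' S)) : Set E) := by
    intro i
    obtain ⟨x, hxS, hxe⟩ := (eqv.symm i).2
    exact ⟨x, hxS, hxe⟩
  choose tp htpS htpO using hrep
  refine ⟨m, tp, ?_, ?_, ?_⟩
  · intro i
    obtain ⟨s, hs, hsupp⟩ := hSmem (tp i) (htpS i)
    exact suppDelta_subset_hat T s hsupp
  · intro i j hij
    have hne : Torbit (tp i) ≠ Torbit (tp j) := by
      rw [htpO i, htpO j]
      intro hc
      exact hij (eqv.symm.injective (Subtype.ext hc))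
    rcases Torbit_eq_or_disjoint (tp i) (tp j) with h | h
    · exact absurd h hne
    · exact h
  · apply Set.Subset.antisymm
    · intro x hx
      have hTor : Torbit x ∈ Torbit '' S := ⟨x, hx, rfl⟩
      set i := eqv ⟨Torbit x, hTor⟩ with hi
      have horb : Torbit (tp i) = Torbit x := by
        rw [htpO i, hi, Equiv.symm_apply_apply]
      rw [Set.mem_iUnion]
      exact ⟨i, horb ▸ self_mem_Torbit x⟩
    · intro x hx
      rw [Set.mem_iUnion] at hx
      obtain ⟨i, hxi⟩ := hx
      obtain ⟨s, hs, hsupp⟩ := hSmem (tp i) (htpS i)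
      have hxs : x ∈ suppDelta T s := suppDelta_orbit_subset T s hsupp hxi
      exact Set.mem_biUnion hs hxs

end MainStatements
end
end
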